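/- arXiv:1808.06674 — 7 statements merged into one kernel-verified Lean document; each statement's English description precedes it below -/
import Mathlib

section
/- Let J and H be real n×n matrices with J skew-symmetric and H symmetric, and let y : ℝ → ℝⁿ be differentiable with y′(t) = (JH)·y(t) for all t (matrix–vector product). Then for every natural number k, the function t ↦ ½ y(t)ᵀ H (JH)^{2k} y(t) is constant; in particular (k = 0) the energy ½ y(t)ᵀ H y(t) is conserved. -/
open Matrix

private lemma hasDerivAt_dotProduct {n : ℕ} {u w : ℝ → (Fin n → ℝ)} {u' w' : Fin n → ℝ} {t : ℝ}
    (hu : HasDerivAt u u' t) (hw : HasDerivAt w w' t) :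
    HasDerivAt (fun t => u t ⬝ᵥ w t) (u' ⬝ᵥ w t + u t ⬝ᵥ w') t := by
  have h : ∀ i : Fin n, HasDerivAt (fun t => u t i * w t i)
      (u' i * w t i + u t i * w' i) t := fun i =>
    (hasDerivAt_pi.1 hu i).mul (hasDerivAt_pi.1 hw i)
  simpa [dotProduct, Finset.sum_add_distrib] using HasDerivAt.fun_sum (fun i _ => h i)

private lemma hasDerivAt_mulVec {n : ℕ} {u : ℝ → (Fin n → ℝ)} {u' : Fin n → ℝ} {t : ℝ}
    (M : Matrix (Fin n) (Fin n) ℝ) (hu : HasDerivAt u u' t) :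
    HasDerivAt (fun t => M *ᵥ u t) (M *ᵥ u') t := by
  rw [hasDerivAt_pi]
  intro i
  have h : ∀ j : Fin n, HasDerivAt (fun t => M i j * u t j) (M i j * u' j) t := fun j =>
    (hasDerivAt_pi.1 hu j).const_mul _
  simpa [Matrix.mulVec, dotProduct] using HasDerivAt.fun_sum (fun j _ => h j)

private lemma mulVec_dotProduct_eq {n : ℕ} (A : Matrix (Fin n) (Fin n) ℝ) (x w : Fin n → ℝ) :
    (A *ᵥ x) ⬝ᵥ w = x ⬝ᵥ (Aᵀ *ᵥ w) := by
  rw [Matrix.dotProduct_mulVec, Matrix.vecMul_transpose]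

/-- For `J` skew-symmetric and `H` symmetric, along any solution of the linear
Hamiltonian system `ẏ = (J H) y`, each quadratic function
`t ↦ ½ y(t)ᵀ H (J H)^(2k) y(t)` is constant (in particular, `k = 0` gives
conservation of the energy `½ yᵀ H y`). -/
theorem first_integrals_linear_hamiltonian {n : ℕ} (J H : Matrix (Fin n) (Fin n) ℝ)
    (hJ : Jᵀ = -J) (hH : Hᵀ = H)
    (y : ℝ → (Fin n → ℝ))
    (hy : ∀ t : ℝ, HasDerivAt y ((J * H) *ᵥ y t) t)
    (k : ℕ) (t s : ℝ) :
    (1 / 2 : ℝ) * (y t ⬝ᵥ ((H * (J * H) ^ (2 * k)) *ᵥ y t)) =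
      (1 / 2 : ℝ) * (y s ⬝ᵥ ((H * (J * H) ^ (2 * k)) *ᵥ y s)) := by
  set A := J * H with hA
  set M := H * (J * H) ^ (2 * k) with hM
  have hkey : Aᵀ * M + M * A = 0 := by
    have h1 : Aᵀ * M = -(H * (J * H) ^ (2 * k + 1)) := by
      rw [hA, hM, transpose_mul, hJ, hH, pow_succ']
      simp [Matrix.mul_assoc, Matrix.neg_mul, Matrix.mul_neg]
    have h2 : M * A = H * (J * H) ^ (2 * k + 1) := by
      rw [hA, hM, pow_succ, Matrix.mul_assoc]
    rw [h1, h2, neg_add_cancel]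
  have hderiv : ∀ r : ℝ, HasDerivAt (fun r => y r ⬝ᵥ (M *ᵥ y r)) 0 r := by
    intro r
    have h := hasDerivAt_dotProduct (hy r) (hasDerivAt_mulVec M (hy r))
    have hz : (A *ᵥ y r) ⬝ᵥ (M *ᵥ y r) + y r ⬝ᵥ (M *ᵥ (A *ᵥ y r)) = 0 := by
      rw [mulVec_dotProduct_eq, Matrix.mulVec_mulVec, Matrix.mulVec_mulVec,
        ← dotProduct_add, ← Matrix.add_mulVec, hkey]
      simp
    rw [← hz]
    exact h
  have hconst : (fun r => y r ⬝ᵥ (M *ᵥ y r)) t = (fun r => y r ⬝ᵥ (M *ᵥ y r)) s := by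
    apply is_const_of_deriv_eq_zero (fun r => (hderiv r).differentiableAt)
    exact fun r => (hderiv r).deriv
  simpa using congrArg (fun x => (1 / 2 : ℝ) * x) hconst
end

section
/- Let J and H be real n×n matrices with J skew-symmetric and H symmetric. Then for all natural numbers k, p and every vector y ∈ ℝⁿ, one has (H(JH)^{2k} y)ᵀ · J · (H(JH)^{2p} y) = 0. In other words, the quadratic functions H_k(y) = ½ yᵀ H (JH)^{2k} y are pairwise in involution with respect to the Poisson bracket {F, G}(y) = ∇F(y)ᵀ J ∇G(y). -/
open Matrix

lemma skew_dot {n : ℕ} (S : Matrix (Fin n) (Fin n) ℝ) (hS : Sᵀ = -S)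
    (y : Fin n → ℝ) : y ⬝ᵥ (S *ᵥ y) = 0 := by
  have h1 : y ⬝ᵥ (S *ᵥ y) = (Sᵀ *ᵥ y) ⬝ᵥ y := by
    rw [dotProduct_mulVec, ← mulVec_transpose]
  rw [hS] at h1
  have h2 : ((-S) *ᵥ y) ⬝ᵥ y = -(y ⬝ᵥ (S *ᵥ y)) := by
    rw [neg_mulVec, neg_dotProduct, dotProduct_comm]
  rw [h2] at h1
  linarith

lemma semiconj_pow {n : ℕ} (J H : Matrix (Fin n) (Fin n) ℝ) (m : ℕ) :
    H * (J * H) ^ m = (H * J) ^ m * H := by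
  have h : SemiconjBy H (J * H) (H * J) := (mul_assoc H J H).symm
  exact h.pow_right m

/-- For `J` skew-symmetric and `H` symmetric, the quadratic first integrals
`H_k(y) = ½ yᵀ H (J H)^(2k) y` are pairwise in involution with respect to the
Poisson bracket `{F, G}(y) = ∇F(y)ᵀ J ∇G(y)`: since `∇H_k(y) = H (J H)^(2k) y`,
this reads `(H (J H)^(2k) y)ᵀ J (H (J H)^(2p) y) = 0`. -/
theorem first_integrals_in_involution {n : ℕ} (J H : Matrix (Fin n) (Fin n) ℝ)
    (hJ : Jᵀ = -J) (hH : Hᵀ = H) (k p : ℕ) (y : Fin n → ℝ) :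
    ((H * (J * H) ^ (2 * k)) *ᵥ y) ⬝ᵥ (J *ᵥ ((H * (J * H) ^ (2 * p)) *ᵥ y)) = 0 := by
  set A : Matrix (Fin n) (Fin n) ℝ :=
    (H * (J * H) ^ (2 * k))ᵀ * (J * (H * (J * H) ^ (2 * p))) with hAdef
  have hJHt : (J * H)ᵀ = -(H * J) := by
    rw [transpose_mul, hJ, hH, mul_neg]
  have hTk : (H * (J * H) ^ (2 * k))ᵀ = (H * J) ^ (2 * k) * H := by
    rw [transpose_mul, transpose_pow, hJHt, hH, neg_pow, Even.neg_one_pow (even_two_mul k),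
      one_mul]
  have hA : A = (H * J) ^ (2 * k + 2 * p + 1) * H := by
    rw [hAdef, hTk, semiconj_pow J H (2 * p),
      show 2 * k + 2 * p + 1 = 2 * k + 1 + 2 * p from by ring, pow_add, pow_succ]
    noncomm_ring
  have hAskew : Aᵀ = -A := by
    rw [hA, transpose_mul, transpose_pow, transpose_mul, hJ, hH, neg_mul, neg_pow,
      Odd.neg_one_pow ⟨k + p, by ring⟩, neg_one_mul, mul_neg, semiconj_pow]
  have swap : ∀ (M : Matrix (Fin n) (Fin n) ℝ) (v : Fin n → ℝ),
      (M *ᵥ y) ⬝ᵥ v = y ⬝ᵥ (Mᵀ *ᵥ v) := by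
    intro M v
    rw [dotProduct_comm, dotProduct_mulVec, ← mulVec_transpose, dotProduct_comm]
  rw [mulVec_mulVec, swap, mulVec_mulVec, ← hAdef, skew_dot A hAskew y]
end

section
/- Let J be a real 2m×2m skew-symmetric matrix, H a real 2m×2m symmetric matrix, and V a real 2m×n matrix satisfying Vᵀ H V = Iₙ. Set H_n := Vᵀ H J H V. Let z : ℝ → ℝⁿ be differentiable with z′(t) = H_n·z(t) for all t and z(0) = Vᵀ H y₀ for some y₀ ∈ ℝ^{2m}, and define y_H(t) := V·z(t). Then for every natural number k, the function t ↦ ½ y_H(t)ᵀ H V (H_n)^{2k} Vᵀ H y_H(t) is constant in t. -/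
open Matrix

/-- First-integral preservation for the Arnoldi projection method with modified
inner product (APMH): if `Vᵀ H V = Iₙ`, `H_n = Vᵀ H J H V`, `z` solves the
projected system `ż = H_n z` with `z(0) = Vᵀ H y₀`, and `y_H = V z`, then each
quantity `t ↦ ½ y_H(t)ᵀ H V (H_n)^(2k) Vᵀ H y_H(t)` is constant in `t`. -/
theorem apmh_preserves_first_integrals {m n : ℕ}
    (J H : Matrix (Fin (2 * m)) (Fin (2 * m)) ℝ)
    (hJ : Jᵀ = -J) (hH : Hᵀ = H)
    (V : Matrix (Fin (2 * m)) (Fin n) ℝ)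
    (hV : Vᵀ * H * V = 1)
    (Hn : Matrix (Fin n) (Fin n) ℝ)
    (hHn : Hn = Vᵀ * H * J * H * V)
    (y₀ : Fin (2 * m) → ℝ)
    (z : ℝ → (Fin n → ℝ))
    (hz : ∀ t : ℝ, HasDerivAt z (Hn *ᵥ z t) t)
    (hz0 : z 0 = Vᵀ *ᵥ (H *ᵥ y₀))
    (yH : ℝ → (Fin (2 * m) → ℝ))
    (hyH : ∀ t : ℝ, yH t = V *ᵥ z t)
    (k : ℕ) (t s : ℝ) :
    (1 / 2 : ℝ) * (yH t ⬝ᵥ ((H * V * Hn ^ (2 * k) * Vᵀ * H) *ᵥ yH t)) =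
      (1 / 2 : ℝ) * (yH s ⬝ᵥ ((H * V * Hn ^ (2 * k) * Vᵀ * H) *ᵥ yH s)) := by
  set A : Matrix (Fin n) (Fin n) ℝ := Hn ^ (2 * k) with hA
  -- `Hn` is skew-symmetric
  have hskew : Hnᵀ = -Hn := by
    subst hHn
    simp only [Matrix.transpose_mul, Matrix.transpose_transpose, hJ, hH]
    simp only [Matrix.mul_neg, Matrix.neg_mul, Matrix.mul_assoc]
  have hkey : Hnᵀ * A + A * Hn = 0 := by
    rw [hskew, hA, Matrix.neg_mul, ← pow_succ', ← pow_succ, neg_add_cancel]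
  -- quadratic form in terms of z
  have hquad : ∀ u : ℝ,
      yH u ⬝ᵥ ((H * V * A * Vᵀ * H) *ᵥ yH u) = z u ⬝ᵥ (A *ᵥ z u) := by
    intro u
    have hM : Vᵀ * (H * V * A * Vᵀ * H * V) = A := by
      calc Vᵀ * (H * V * A * Vᵀ * H * V)
          = (Vᵀ * H * V) * A * (Vᵀ * H * V) := by
            simp only [Matrix.mul_assoc]
        _ = A := by rw [hV, Matrix.one_mul, Matrix.mul_one]
    rw [hyH u, Matrix.mulVec_mulVec, Matrix.dotProduct_mulVec,
      Matrix.vecMul_mulVec, hM, ← Matrix.dotProduct_mulVec]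
  -- the scalar function z ⬝ᵥ A z has zero derivative
  have hzi : ∀ (u : ℝ) (i : Fin n), HasDerivAt (fun r => z r i) ((Hn *ᵥ z u) i) u :=
    fun u i => hasDerivAt_pi.mp (hz u) i
  have hg : ∀ u : ℝ, HasDerivAt (fun r => z r ⬝ᵥ (A *ᵥ z r)) 0 u := by
    intro u
    have h1 : HasDerivAt (fun r => z r ⬝ᵥ (A *ᵥ z r))
        ((Hn *ᵥ z u) ⬝ᵥ (A *ᵥ z u) + z u ⬝ᵥ (A *ᵥ (Hn *ᵥ z u))) u := by
      have hsum : HasDerivAt (fun r => ∑ i, ∑ j, z r i * (A i j * z r j))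
          (∑ i, ∑ j, ((Hn *ᵥ z u) i * (A i j * z u j)
            + z u i * (A i j * (Hn *ᵥ z u) j))) u := by
        apply HasDerivAt.fun_sum
        intro i _
        apply HasDerivAt.fun_sum
        intro j _
        exact (hzi u i).mul ((hzi u j).const_mul (A i j))
      have e1 : ∀ r : ℝ, z r ⬝ᵥ (A *ᵥ z r) = ∑ i, ∑ j, z r i * (A i j * z r j) := by
        intro r; simp [dotProduct, mulVec, Finset.mul_sum]
      have e2 : (Hn *ᵥ z u) ⬝ᵥ (A *ᵥ z u) + z u ⬝ᵥ (A *ᵥ (Hn *ᵥ z u))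
          = ∑ i, ∑ j, ((Hn *ᵥ z u) i * (A i j * z u j)
            + z u i * (A i j * (Hn *ᵥ z u) j)) := by
        simp [dotProduct, mulVec, Finset.mul_sum, Finset.sum_add_distrib]
      rw [e2]
      simpa only [← e1] using hsum
    have hzero : (Hn *ᵥ z u) ⬝ᵥ (A *ᵥ z u) + z u ⬝ᵥ (A *ᵥ (Hn *ᵥ z u)) = 0 := by
      have t1 : (Hn *ᵥ z u) ⬝ᵥ (A *ᵥ z u) = z u ⬝ᵥ ((Hnᵀ * A) *ᵥ z u) := by
        rw [← Matrix.mulVec_mulVec, Matrix.dotProduct_mulVec (z u),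
          Matrix.vecMul_transpose]
      have t2 : z u ⬝ᵥ (A *ᵥ (Hn *ᵥ z u)) = z u ⬝ᵥ ((A * Hn) *ᵥ z u) := by
        rw [Matrix.mulVec_mulVec]
      rw [t1, t2, ← dotProduct_add, ← Matrix.add_mulVec, hkey]
      simp
    rw [← hzero]; exact h1
  have hconst : (fun r => z r ⬝ᵥ (A *ᵥ z r)) t = (fun r => z r ⬝ᵥ (A *ᵥ z r)) s :=
    is_const_of_deriv_eq_zero (fun u => (hg u).differentiableAt)
      (fun u => (hg u).deriv) t s
  rw [hquad t, hquad s]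
  exact congrArg (fun x => 1 / 2 * x) hconst
end

section
/- Let A be a real 2m×2m skew-symmetric matrix and V a real 2m×n matrix with Vᵀ V = Iₙ. Set H_n := Vᵀ A V. Let z : ℝ → ℝⁿ be differentiable with z′(t) = H_n·z(t) for all t, and define y_A(t) := V·z(t). Then for every natural number k, the function t ↦ ½ y_A(t)ᵀ V (H_n)^{2k} Vᵀ y_A(t) is constant in t. -/
open Matrix

section Aux

variable {n : ℕ}

lemma dot_deriv_aux (M : Matrix (Fin n) (Fin n) ℝ) (z : ℝ → (Fin n → ℝ))
    (z' : Fin n → ℝ) (x : ℝ) (hz : HasDerivAt z z' x) :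
    HasDerivAt (fun t => z t ⬝ᵥ (M *ᵥ z t))
      (z' ⬝ᵥ (M *ᵥ z x) + z x ⬝ᵥ (M *ᵥ z')) x := by
  have hMz : HasDerivAt (fun t => M *ᵥ z t) (M *ᵥ z') x := by
    rw [hasDerivAt_pi] at hz ⊢
    intro i
    simpa [Matrix.mulVec, dotProduct, Finset.mul_sum] using
      HasDerivAt.fun_sum (fun j _ => ((hz j).const_mul (M i j)))
  rw [hasDerivAt_pi] at hz hMz
  have : HasDerivAt (fun t => z t ⬝ᵥ (M *ᵥ z t))
      (∑ i, (z' i * (M *ᵥ z x) i + z x i * (M *ᵥ z') i)) x := by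
    simpa [dotProduct] using
      HasDerivAt.fun_sum (fun i _ => (hz i).mul (hMz i))
  simpa [dotProduct, Finset.sum_add_distrib] using this

end Aux

/-- Preservation of the modified first integrals by the Arnoldi projection
method: for `A` skew-symmetric, `V` with orthonormal columns (`Vᵀ V = Iₙ`),
`H_n = Vᵀ A V`, `z` solving `ż = H_n z` and `y_A = V z`, each quantity
`t ↦ ½ y_A(t)ᵀ V (H_n)^(2k) Vᵀ y_A(t)` is constant in `t`. -/
theorem apm_preserves_modified_integrals {m n : ℕ}
    (A : Matrix (Fin (2 * m)) (Fin (2 * m)) ℝ)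
    (hA : Aᵀ = -A)
    (V : Matrix (Fin (2 * m)) (Fin n) ℝ)
    (hV : Vᵀ * V = 1)
    (Hn : Matrix (Fin n) (Fin n) ℝ)
    (hHn : Hn = Vᵀ * A * V)
    (z : ℝ → (Fin n → ℝ))
    (hz : ∀ t : ℝ, HasDerivAt z (Hn *ᵥ z t) t)
    (yA : ℝ → (Fin (2 * m) → ℝ))
    (hyA : ∀ t : ℝ, yA t = V *ᵥ z t)
    (k : ℕ) (t s : ℝ) :
    (1 / 2 : ℝ) * (yA t ⬝ᵥ ((V * Hn ^ (2 * k) * Vᵀ) *ᵥ yA t)) =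
      (1 / 2 : ℝ) * (yA s ⬝ᵥ ((V * Hn ^ (2 * k) * Vᵀ) *ᵥ yA s)) := by
  set M := Hn ^ (2 * k) with hM
  have hHnskew : Hnᵀ = -Hn := by
    rw [hHn]
    simp [Matrix.transpose_mul, hA, Matrix.mul_assoc, Matrix.neg_mul,
      Matrix.mul_neg]
  -- reduce to z
  have key : ∀ u : ℝ, yA u ⬝ᵥ ((V * M * Vᵀ) *ᵥ yA u) = z u ⬝ᵥ (M *ᵥ z u) := by
    intro u
    rw [hyA u, Matrix.mulVec_mulVec, Matrix.mul_assoc (V * M) Vᵀ V, hV,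
      Matrix.mul_one, ← Matrix.mulVec_mulVec, Matrix.dotProduct_mulVec,
      ← Matrix.vecMul_transpose,
      Matrix.vecMul_vecMul, hV, Matrix.vecMul_one]
  -- constant function
  have hconst : ∀ u : ℝ, HasDerivAt (fun r => z r ⬝ᵥ (M *ᵥ z r)) 0 u := by
    intro u
    have h := dot_deriv_aux M z (Hn *ᵥ z u) u (hz u)
    have hcomm : Hn * M = M * Hn := (Commute.pow_self Hn (2 * k)).symm.eq
    have : (Hn *ᵥ z u) ⬝ᵥ (M *ᵥ z u) + z u ⬝ᵥ (M *ᵥ (Hn *ᵥ z u)) = 0 := by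
      have h1 : (Hn *ᵥ z u) ⬝ᵥ (M *ᵥ z u) = (z u ᵥ* (Hnᵀ * M)) ⬝ᵥ z u := by
        rw [Matrix.dotProduct_mulVec, ← Matrix.vecMul_transpose,
          Matrix.vecMul_vecMul]
      have h2 : z u ⬝ᵥ (M *ᵥ (Hn *ᵥ z u)) = (z u ᵥ* (M * Hn)) ⬝ᵥ z u := by
        rw [Matrix.mulVec_mulVec, Matrix.dotProduct_mulVec]
      rw [h1, h2, hHnskew, Matrix.neg_mul, ← hcomm, Matrix.vecMul_neg,
        neg_dotProduct, neg_add_cancel]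
    rwa [this] at h
  have := is_const_of_deriv_eq_zero (f := fun r => z r ⬝ᵥ (M *ᵥ z r))
    (fun u => (hconst u).differentiableAt) (fun u => (hconst u).deriv) t s
  rw [key t, key s, this]
end

section
/- Let J_{2m} be the standard symplectic matrix and A a real 2m×2m skew-symmetric matrix with J_{2m}·A = A·J_{2m}. Let V be a real 2m×n matrix with Vᵀ V = Iₙ, y₀ ∈ ℝ^{2m}, and let z : ℝ → ℝⁿ be differentiable with z′(t) = (VᵀAV)·z(t) for all t and z(0) = Vᵀ y₀. Set y_A(t) := V·z(t). Then for all t, |½ y_A(t)ᵀ (J_{2m}⁻¹A) y_A(t)| ≤ ½ ‖y₀‖² · ‖J_{2m}⁻¹A‖₂, where ‖·‖₂ denotes the ℓ²-operator norm of a matrix and ‖y₀‖ the Euclidean norm. -/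
open Matrix

open scoped RealInnerProductSpace

private lemma apm_dot_mulVec_left {k l : Type*} [Fintype k] [Fintype l]
    (M : Matrix k l ℝ) (x : l → ℝ) (y : k → ℝ) :
    (M *ᵥ x) ⬝ᵥ y = x ⬝ᵥ (Mᵀ *ᵥ y) := by
  rw [Matrix.dotProduct_mulVec, Matrix.vecMul_transpose, dotProduct_comm]

private lemma apm_dot_self_nonneg {k : Type*} [Fintype k] (x : k → ℝ) : 0 ≤ x ⬝ᵥ x :=
  Finset.sum_nonneg fun _ _ => mul_self_nonneg _

private lemma apm_skew_dot {k : Type*} [Fintype k] (B : Matrix k k ℝ) (hB : Bᵀ = -B)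
    (x : k → ℝ) : x ⬝ᵥ (B *ᵥ x) = 0 := by
  have h := apm_dot_mulVec_left B x x
  rw [hB, Matrix.neg_mulVec, dotProduct_neg, dotProduct_comm] at h
  linarith

private lemma apm_dot_eq_inner {k : Type*} [Fintype k] (a b : k → ℝ) :
    a ⬝ᵥ b = ⟪((WithLp.equiv 2 _).symm a : EuclideanSpace ℝ k), (WithLp.equiv 2 _).symm b⟫ := by
  rw [EuclideanSpace.inner_eq_star_dotProduct]
  simp [dotProduct, mul_comm]

private lemma apm_abs_quad_le {k : Type*} [Fintype k] [DecidableEq k]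
    (M : Matrix k k ℝ) (v : k → ℝ) :
    |v ⬝ᵥ (M *ᵥ v)| ≤ ‖Matrix.toEuclideanCLM (𝕜 := ℝ) M‖ * (v ⬝ᵥ v) := by
  set w : EuclideanSpace ℝ k := (WithLp.equiv 2 _).symm v with hw
  have h1 : v ⬝ᵥ (M *ᵥ v) = ⟪w, Matrix.toEuclideanCLM (𝕜 := ℝ) M w⟫ := by
    rw [EuclideanSpace.inner_eq_star_dotProduct]
    simp [hw, Matrix.mulVec, dotProduct, Matrix.toLin'_apply, mul_comm]
  have h2 : v ⬝ᵥ v = ‖w‖ ^ 2 := by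
    rw [← real_inner_self_eq_norm_sq, EuclideanSpace.inner_eq_star_dotProduct]
    simp [hw, dotProduct]
  rw [h1, h2]
  calc |⟪w, Matrix.toEuclideanCLM (𝕜 := ℝ) M w⟫| ≤ ‖w‖ * ‖Matrix.toEuclideanCLM (𝕜 := ℝ) M w‖ :=
        abs_real_inner_le_norm _ _
    _ ≤ ‖w‖ * (‖Matrix.toEuclideanCLM (𝕜 := ℝ) M‖ * ‖w‖) := by
        gcongr; exact (Matrix.toEuclideanCLM (𝕜 := ℝ) M).le_opNorm w
    _ = ‖Matrix.toEuclideanCLM (𝕜 := ℝ) M‖ * ‖w‖ ^ 2 := by ring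

private lemma apm_proj_le {k l : Type*} [Fintype k] [Fintype l] [DecidableEq l]
    (V : Matrix k l ℝ) (hV : Vᵀ * V = 1) (y₀ : k → ℝ) :
    (Vᵀ *ᵥ y₀) ⬝ᵥ (Vᵀ *ᵥ y₀) ≤ y₀ ⬝ᵥ y₀ := by
  set u := Vᵀ *ᵥ y₀ with hu
  set p := V *ᵥ u with hp
  have hVu : Vᵀ *ᵥ p = u := by
    rw [hp, Matrix.mulVec_mulVec, hV, Matrix.one_mulVec]
  have hpp : p ⬝ᵥ p = u ⬝ᵥ u := by
    rw [hp, apm_dot_mulVec_left, ← hp, hVu]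
  have hyp : y₀ ⬝ᵥ p = u ⬝ᵥ u := by
    rw [dotProduct_comm, hp, apm_dot_mulVec_left, ← hu, dotProduct_comm]
  have hcs : (y₀ ⬝ᵥ p) * (y₀ ⬝ᵥ p) ≤ (y₀ ⬝ᵥ y₀) * (p ⬝ᵥ p) := by
    have h := real_inner_mul_inner_self_le ((WithLp.equiv 2 _).symm y₀ : EuclideanSpace ℝ k)
      ((WithLp.equiv 2 _).symm p)
    rw [apm_dot_eq_inner y₀ p, apm_dot_eq_inner y₀ y₀, apm_dot_eq_inner p p]
    exact h
  nlinarith [hcs, hpp, hyp, apm_dot_self_nonneg u, apm_dot_self_nonneg y₀]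

private lemma apm_dot_const {k : Type*} [Fintype k] (B : Matrix k k ℝ) (hB : Bᵀ = -B)
    (z : ℝ → k → ℝ) (hz : ∀ t, HasDerivAt z (B *ᵥ z t) t) (t : ℝ) :
    z t ⬝ᵥ z t = z 0 ⬝ᵥ z 0 := by
  have hg : ∀ s, HasDerivAt (fun r => z r ⬝ᵥ z r) 0 s := by
    intro s
    have hi := hasDerivAt_pi.1 (hz s)
    have hsum : HasDerivAt (fun r => ∑ i, z r i * z r i)
        (∑ i, ((B *ᵥ z s) i * z s i + z s i * (B *ᵥ z s) i)) s :=
      HasDerivAt.fun_sum fun i _ => (hi i).mul (hi i)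
    have h0 : z s ⬝ᵥ (B *ᵥ z s) = 0 := apm_skew_dot B hB (z s)
    have heq : (∑ i, ((B *ᵥ z s) i * z s i + z s i * (B *ᵥ z s) i)) = 0 := by
      rw [Finset.sum_add_distrib]
      have hcm : (B *ᵥ z s) ⬝ᵥ z s = 0 := by rw [dotProduct_comm]; exact h0
      rw [show (∑ i, (B *ᵥ z s) i * z s i) = (B *ᵥ z s) ⬝ᵥ z s from rfl,
        show (∑ i, z s i * (B *ᵥ z s) i) = z s ⬝ᵥ (B *ᵥ z s) from rfl, h0, hcm, add_zero]
    rw [heq] at hsum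
    simpa [dotProduct] using hsum
  exact is_const_of_deriv_eq_zero (fun s => (hg s).differentiableAt)
    (fun s => (hg s).deriv) t 0

/-- Bounded energy for the Arnoldi projection method: with `J` the standard
symplectic matrix, `A` skew-symmetric and commuting with `J`, `Vᵀ V = Iₙ`,
`z` solving the projected system `ż = (Vᵀ A V) z` with `z(0) = Vᵀ y₀`, and
`y_A = V z`, the energy `½ y_Aᵀ (J⁻¹ A) y_A` satisfies
`|½ y_A(t)ᵀ (J⁻¹ A) y_A(t)| ≤ ½ ‖y₀‖² ‖J⁻¹ A‖₂`, where `‖·‖₂` is the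
ℓ²-operator norm (realized via `Matrix.toEuclideanCLM`). -/
theorem apm_energy_bounded {m n : ℕ}
    (J : Matrix (Fin m ⊕ Fin m) (Fin m ⊕ Fin m) ℝ)
    (hJ : J = Matrix.fromBlocks 0 1 (-1) 0)
    (A : Matrix (Fin m ⊕ Fin m) (Fin m ⊕ Fin m) ℝ)
    (hA : Aᵀ = -A) (hJA : J * A = A * J)
    (V : Matrix (Fin m ⊕ Fin m) (Fin n) ℝ)
    (hV : Vᵀ * V = 1)
    (y₀ : (Fin m ⊕ Fin m) → ℝ)
    (z : ℝ → (Fin n → ℝ))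
    (hz : ∀ t : ℝ, HasDerivAt z ((Vᵀ * A * V) *ᵥ z t) t)
    (hz0 : z 0 = Vᵀ *ᵥ y₀)
    (yA : ℝ → ((Fin m ⊕ Fin m) → ℝ))
    (hyA : ∀ t : ℝ, yA t = V *ᵥ z t)
    (t : ℝ) :
    |(1 / 2 : ℝ) * (yA t ⬝ᵥ ((J⁻¹ * A) *ᵥ yA t))| ≤
      (1 / 2 : ℝ) * (y₀ ⬝ᵥ y₀) * ‖Matrix.toEuclideanCLM (𝕜 := ℝ) (J⁻¹ * A)‖ := by
  set M := J⁻¹ * A with hM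
  -- B is skew-symmetric
  have hB : (Vᵀ * A * V)ᵀ = -(Vᵀ * A * V) := by
    rw [Matrix.transpose_mul, Matrix.transpose_mul, Matrix.transpose_transpose, hA]
    simp [Matrix.mul_assoc]
  -- norm of z is conserved
  have hconst : z t ⬝ᵥ z t = z 0 ⬝ᵥ z 0 := apm_dot_const _ hB z hz t
  -- ‖yA t‖² = ‖z t‖²
  have hyy : yA t ⬝ᵥ yA t = z t ⬝ᵥ z t := by
    rw [hyA t, apm_dot_mulVec_left, Matrix.mulVec_mulVec, hV, Matrix.one_mulVec]
  -- ‖z 0‖² ≤ ‖y₀‖²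
  have hz0le : z 0 ⬝ᵥ z 0 ≤ y₀ ⬝ᵥ y₀ := by
    rw [hz0]; exact apm_proj_le V hV y₀
  have hnorm : (0 : ℝ) ≤ ‖Matrix.toEuclideanCLM (𝕜 := ℝ) M‖ := norm_nonneg _
  have hmain : |yA t ⬝ᵥ (M *ᵥ yA t)| ≤ ‖Matrix.toEuclideanCLM (𝕜 := ℝ) M‖ * (y₀ ⬝ᵥ y₀) := by
    calc |yA t ⬝ᵥ (M *ᵥ yA t)| ≤ ‖Matrix.toEuclideanCLM (𝕜 := ℝ) M‖ * (yA t ⬝ᵥ yA t) :=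
          apm_abs_quad_le M (yA t)
      _ ≤ ‖Matrix.toEuclideanCLM (𝕜 := ℝ) M‖ * (y₀ ⬝ᵥ y₀) := by
          apply mul_le_mul_of_nonneg_left _ hnorm
          rw [hyy, hconst]; exact hz0le
  rw [abs_mul]
  rw [abs_of_nonneg (by norm_num : (0:ℝ) ≤ (1/2:ℝ))]
  calc (1/2 : ℝ) * |yA t ⬝ᵥ (M *ᵥ yA t)|
      ≤ (1/2 : ℝ) * (‖Matrix.toEuclideanCLM (𝕜 := ℝ) M‖ * (y₀ ⬝ᵥ y₀)) := by linarith
    _ = (1/2 : ℝ) * (y₀ ⬝ᵥ y₀) * ‖Matrix.toEuclideanCLM (𝕜 := ℝ) M‖ := by ring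
end

section
/- Let J_{2m} and J_{2n} be the standard symplectic matrices, H a real 2m×2m symmetric matrix, A = J_{2m}H, and S a real 2m×2n matrix with Sᵀ J_{2m} S = J_{2n}. Let z : ℝ → ℝ^{2n} be differentiable with z′(t) = (J_{2n} Sᵀ J_{2m}⁻¹ A S)·z(t) for all t, and suppose y₀ = S·z(0). Then for all t, ½ (S·z(t))ᵀ H (S·z(t)) = ½ y₀ᵀ H y₀: the energy of the original Hamiltonian system ẏ = Ay is preserved by the projection method y_B = Sz and equals its initial value. -/
open Matrix

private lemma mulVec_dot {p q : Type*} [Fintype p] [Fintype q]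
    (B : Matrix p q ℝ) (a : q → ℝ) (b : p → ℝ) : (B *ᵥ a) ⬝ᵥ b = a ⬝ᵥ (Bᵀ *ᵥ b) := by
  rw [Matrix.dotProduct_mulVec, Matrix.vecMul_transpose]

private lemma quad_cancel {p : Type*} [Fintype p] [DecidableEq p]
    (P Q : Matrix p p ℝ) (h : Pᵀ * Q + Q * P = 0) (v : p → ℝ) :
    (P *ᵥ v) ⬝ᵥ (Q *ᵥ v) + v ⬝ᵥ (Q *ᵥ (P *ᵥ v)) = 0 := by
  rw [mulVec_dot]
  simp only [Matrix.mulVec_mulVec, ← dotProduct_add, ← Matrix.add_mulVec, h]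
  simp

/-- Energy preservation for projection methods based on `J`-orthogonal bases:
with `H` symmetric, `A = J_{2m} H`, `Sᵀ J_{2m} S = J_{2n}`, `z` solving the
projected system `ż = (J_{2n} Sᵀ J_{2m}⁻¹ A S) z`, and `y₀ = S z(0)`, the
energy `½ yᵀ H y` of `ẏ = A y` is preserved by `y_B = S z` and equals its
initial value: `½ (S z(t))ᵀ H (S z(t)) = ½ y₀ᵀ H y₀` for all `t`. -/
theorem bjpm_energy_preserving {m n : ℕ}
    (J2m : Matrix (Fin m ⊕ Fin m) (Fin m ⊕ Fin m) ℝ)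
    (hJ2m : J2m = Matrix.fromBlocks 0 1 (-1) 0)
    (J2n : Matrix (Fin n ⊕ Fin n) (Fin n ⊕ Fin n) ℝ)
    (hJ2n : J2n = Matrix.fromBlocks 0 1 (-1) 0)
    (H : Matrix (Fin m ⊕ Fin m) (Fin m ⊕ Fin m) ℝ)
    (hH : Hᵀ = H)
    (A : Matrix (Fin m ⊕ Fin m) (Fin m ⊕ Fin m) ℝ)
    (hA : A = J2m * H)
    (S : Matrix (Fin m ⊕ Fin m) (Fin n ⊕ Fin n) ℝ)
    (hS : Sᵀ * J2m * S = J2n)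
    (z : ℝ → ((Fin n ⊕ Fin n) → ℝ))
    (hz : ∀ t : ℝ, HasDerivAt z ((J2n * Sᵀ * J2m⁻¹ * A * S) *ᵥ z t) t)
    (y₀ : (Fin m ⊕ Fin m) → ℝ)
    (hy₀ : y₀ = S *ᵥ z 0)
    (t : ℝ) :
    (1 / 2 : ℝ) * ((S *ᵥ z t) ⬝ᵥ (H *ᵥ (S *ᵥ z t))) =
      (1 / 2 : ℝ) * (y₀ ⬝ᵥ (H *ᵥ y₀)) := by
  have hJJ : J2m * J2m = -1 := by
    rw [hJ2m]
    ext i j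
    rcases i with i | i <;> rcases j with j | j <;>
      simp [Matrix.fromBlocks_multiply, Matrix.one_apply]
  have hinv : J2m⁻¹ = -J2m := by
    apply inv_eq_right_inv
    rw [Matrix.mul_neg, hJJ]; simp
  set K := Sᵀ * H * S with hK
  have hKsymm : Kᵀ = K := by
    rw [hK]
    simp [Matrix.transpose_mul, hH, Matrix.mul_assoc]
  have hJnT : J2nᵀ = -J2n := by
    rw [hJ2n, Matrix.fromBlocks_transpose, Matrix.fromBlocks_neg]
    simp
  set M := J2n * Sᵀ * J2m⁻¹ * A * S with hM
  have hMK : M = J2n * K := by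
    rw [hM, hA, hinv, hK]
    simp only [Matrix.mul_assoc, Matrix.neg_mul, Matrix.mul_neg, ← Matrix.mul_assoc]
    simp only [Matrix.mul_assoc]
    rw [show J2m * (J2m * (H * S)) = (J2m * J2m) * (H * S) by rw [Matrix.mul_assoc], hJJ]
    simp [Matrix.mul_assoc]
  have hMTK : Mᵀ * K + K * M = 0 := by
    rw [hMK, Matrix.transpose_mul, hJnT, hKsymm]
    simp only [Matrix.mul_neg, Matrix.neg_mul, Matrix.mul_assoc]
    exact neg_add_cancel _
  have key : ∀ s : ℝ, HasDerivAt (fun t => z t ⬝ᵥ (K *ᵥ z t)) 0 s := by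
    intro s
    have hz' : ∀ i, HasDerivAt (fun t => z t i) ((M *ᵥ z s) i) s :=
      fun i => hasDerivAt_pi.1 (hz s) i
    have h1 : HasDerivAt (fun t => z t ⬝ᵥ (K *ᵥ z t))
        ((M *ᵥ z s) ⬝ᵥ (K *ᵥ z s) + z s ⬝ᵥ (K *ᵥ (M *ᵥ z s))) s := by
      have hterm : ∀ i, HasDerivAt (fun t => z t i * (K *ᵥ z t) i)
          ((M *ᵥ z s) i * (K *ᵥ z s) i + z s i * (K *ᵥ (M *ᵥ z s)) i) s := by
        intro i
        have hsum : HasDerivAt (fun t => (K *ᵥ z t) i) ((K *ᵥ (M *ᵥ z s)) i) s := by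
          simp only [Matrix.mulVec, dotProduct]
          exact HasDerivAt.fun_sum fun j _ => (hz' j).const_mul (K i j)
        exact (hz' i).mul hsum
      have := HasDerivAt.fun_sum (fun i (_ : i ∈ Finset.univ) => hterm i)
      simpa [dotProduct, Finset.sum_add_distrib] using this
    have hzero := quad_cancel M K hMTK (z s)
    rw [← hzero]
    exact h1
  have hconst : z t ⬝ᵥ (K *ᵥ z t) = z 0 ⬝ᵥ (K *ᵥ z 0) := by
    have := is_const_of_deriv_eq_zero (f := fun t => z t ⬝ᵥ (K *ᵥ z t))
      (fun s => (key s).differentiableAt) (fun s => (key s).deriv) t 0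
    simpa using this
  have hquad : ∀ v : (Fin n ⊕ Fin n) → ℝ,
      (S *ᵥ v) ⬝ᵥ (H *ᵥ (S *ᵥ v)) = v ⬝ᵥ (K *ᵥ v) := by
    intro v
    rw [mulVec_dot, hK]
    simp [Matrix.mulVec_mulVec, Matrix.mul_assoc]
  rw [hy₀, hquad, hquad, hconst]
end

section
/- Let H₁₁ be a real m×m matrix, let A be the 2m×2m block matrix A = [[0, I_m], [−H₁₁, 0]], and let y₀ = (0, p₀) ∈ ℝ^{2m} with p₀ ∈ ℝ^m. Then for every natural number k: A^{2k}·y₀ = (0, (−H₁₁)^k p₀) and A^{2k+1}·y₀ = ((−H₁₁)^k p₀, 0). Consequently the Krylov subspace K_{2n}(A, y₀) = span{y₀, Ay₀, …, A^{2n−1}y₀} equals span{e₁⊗(−H₁₁)^j p₀, e₂⊗(−H₁₁)^j p₀ : j = 0, …, n−1}, where e₁, e₂ are the canonical basis vectors of ℝ² and ⊗ the Kronecker product. -/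
open Matrix

lemma krylov_aux {m : ℕ} (H₁₁ : Matrix (Fin m) (Fin m) ℝ)
    (p₀ : Fin m → ℝ) (k : ℕ) :
    ((Matrix.fromBlocks 0 1 (-H₁₁) 0) ^ (2 * k)) *ᵥ Sum.elim (0 : Fin m → ℝ) p₀
      = Sum.elim (0 : Fin m → ℝ) (((-H₁₁) ^ k) *ᵥ p₀) ∧
    ((Matrix.fromBlocks 0 1 (-H₁₁) 0) ^ (2 * k + 1)) *ᵥ Sum.elim (0 : Fin m → ℝ) p₀
      = Sum.elim (((-H₁₁) ^ k) *ᵥ p₀) (0 : Fin m → ℝ) := by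
  induction k with
  | zero =>
    constructor
    · simp
    · simp [pow_one, Matrix.fromBlocks_mulVec]
  | succ k ih =>
    obtain ⟨ih1, ih2⟩ := ih
    have h1 : 2 * (k + 1) = (2 * k + 1) + 1 := by ring
    have key : ((Matrix.fromBlocks 0 1 (-H₁₁) 0) ^ (2 * (k+1))) *ᵥ Sum.elim (0 : Fin m → ℝ) p₀
        = Sum.elim (0 : Fin m → ℝ) (((-H₁₁) ^ (k+1)) *ᵥ p₀) := by
      rw [h1, pow_succ', ← Matrix.mulVec_mulVec, ih2, Matrix.fromBlocks_mulVec]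
      simp [Matrix.mulVec_mulVec, ← pow_succ']
    refine ⟨key, ?_⟩
    rw [pow_succ', ← Matrix.mulVec_mulVec, key, Matrix.fromBlocks_mulVec]
    simp

/-- Krylov subspace structure for `A = [[0, I], [−H₁₁, 0]]` and `y₀ = (0, p₀)`:
`A^(2k) y₀ = (0, (−H₁₁)^k p₀)` and `A^(2k+1) y₀ = ((−H₁₁)^k p₀, 0)` for all
`k`, and consequently the Krylov subspace
`K_{2n}(A, y₀) = span{y₀, A y₀, …, A^(2n−1) y₀}` equals
`span{((−H₁₁)^j p₀, 0), (0, (−H₁₁)^j p₀) : j = 0, …, n−1}` (vectors in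
`ℝ^{2m}` written in block form `(u, v)`, i.e. `e₁ ⊗ u + e₂ ⊗ v`). -/
theorem krylov_subspace_special_structure {m : ℕ} (n : ℕ)
    (H₁₁ : Matrix (Fin m) (Fin m) ℝ)
    (A : Matrix (Fin m ⊕ Fin m) (Fin m ⊕ Fin m) ℝ)
    (hA : A = Matrix.fromBlocks 0 1 (-H₁₁) 0)
    (p₀ : Fin m → ℝ)
    (y₀ : (Fin m ⊕ Fin m) → ℝ)
    (hy₀ : y₀ = Sum.elim (0 : Fin m → ℝ) p₀) :
    (∀ k : ℕ, (A ^ (2 * k)) *ᵥ y₀ = Sum.elim (0 : Fin m → ℝ) (((-H₁₁) ^ k) *ᵥ p₀)) ∧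
    (∀ k : ℕ, (A ^ (2 * k + 1)) *ᵥ y₀ = Sum.elim (((-H₁₁) ^ k) *ᵥ p₀) (0 : Fin m → ℝ)) ∧
    Submodule.span ℝ {w : (Fin m ⊕ Fin m) → ℝ | ∃ j < 2 * n, w = (A ^ j) *ᵥ y₀} =
      Submodule.span ℝ
        ({w | ∃ j < n, w = Sum.elim (((-H₁₁) ^ j) *ᵥ p₀) (0 : Fin m → ℝ)} ∪
         {w | ∃ j < n, w = Sum.elim (0 : Fin m → ℝ) (((-H₁₁) ^ j) *ᵥ p₀)}) := by
  subst hA hy₀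
  have h1 := fun k => (krylov_aux H₁₁ p₀ k).1
  have h2 := fun k => (krylov_aux H₁₁ p₀ k).2
  refine ⟨h1, h2, ?_⟩
  congr 1
  ext w
  constructor
  · rintro ⟨j, hj, rfl⟩
    rcases Nat.even_or_odd j with ⟨k, hk⟩ | ⟨k, hk⟩
    · right; exact ⟨k, by omega, by rw [hk, ← two_mul, h1]⟩
    · left; exact ⟨k, by omega, by rw [hk, h2]⟩
  · rintro (⟨j, hj, rfl⟩ | ⟨j, hj, rfl⟩)
    · exact ⟨2 * j + 1, by omega, (h2 j).symm⟩
    · exact ⟨2 * j, by omega, (h1 j).symm⟩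
end
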